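/- For a positively homogeneous map σ: ℝ^n → ℝ^n (σ(λv) = λσ(v) for all λ > 0) and nonzero v ∈ ℝ^n with σ(v) ≠ 0, the Möbius pointwise application σ^{⊗α}(y) = exp_0^α(σ(log_0^α(y))) on the Poincaré ball D^{n,α} simplifies to (1/√α) tanh((‖σ(y)‖/‖y‖)·tanh⁻¹(√α‖y‖)) · σ(y)/‖σ(y)‖ for y ≠ 0. -/

import Mathlib

noncomputable section
open Finset

/-- Lorentzian scalar product on ℝ^{n+1}. -/
def lprod {n : ℕ} (x y : Fin (n + 1) → ℝ) : ℝ :=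
  -(x 0 * y 0) + ∑ i : Fin n, x i.succ * y i.succ

/-- The hyperboloid H^{n,β}. -/
def onH {n : ℕ} (β : ℝ) (x : Fin (n + 1) → ℝ) : Prop :=
  lprod x x = -β ∧ 0 < x 0

/-- The origin (√β, 0, …, 0) of the hyperboloid. -/
def orig (n : ℕ) (β : ℝ) : Fin (n + 1) → ℝ :=
  Fin.cons (Real.sqrt β) (fun _ => 0)

/-- Lorentzian norm. -/
def lnorm {n : ℕ} (v : Fin (n + 1) → ℝ) : ℝ := Real.sqrt (lprod v v)

/-- Euclidean norm of a vector in ℝ^n. -/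
def enormR {n : ℕ} (v : Fin n → ℝ) : ℝ := Real.sqrt (∑ i : Fin n, (v i) ^ 2)

/-- Exponential map at the origin of the hyperboloid. -/
def expO {n : ℕ} (β : ℝ) (v : Fin (n + 1) → ℝ) : Fin (n + 1) → ℝ :=
  fun i => Real.cosh (lnorm v / Real.sqrt β) * orig n β i
    + Real.sqrt β * Real.sinh (lnorm v / Real.sqrt β) * (v i / lnorm v)

/-- Inverse hyperbolic cosine. -/
def arcosh (x : ℝ) : ℝ := Real.log (x + Real.sqrt (x ^ 2 - 1))

/-- Intrinsic distance on the hyperboloid. -/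
def dH {n : ℕ} (β : ℝ) (x y : Fin (n + 1) → ℝ) : ℝ :=
  Real.sqrt β * arcosh (-(lprod x y) / β)

/-- Logarithmic map at the origin of the hyperboloid. -/
def logO {n : ℕ} (β : ℝ) (x : Fin (n + 1) → ℝ) : Fin (n + 1) → ℝ :=
  fun i => dH β (orig n β) x *
    ((x i + (1 / β) * lprod (orig n β) x * orig n β i) /
      lnorm (fun j => x j + (1 / β) * lprod (orig n β) x * orig n β j))

/-- Squared Lorentzian distance. -/
def dL2 {n : ℕ} (β : ℝ) (x y : Fin (n + 1) → ℝ) : ℝ := -2 * β - 2 * lprod x y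

/-- Inverse hyperbolic tangent. -/
def artanh (x : ℝ) : ℝ := Real.log ((1 + x) / (1 - x)) / 2

/-- Exponential map at the origin of the Poincaré ball. -/
def expD {n : ℕ} (α : ℝ) (v : Fin n → ℝ) : Fin n → ℝ :=
  fun i => Real.tanh (Real.sqrt α * enormR v) * (v i / (Real.sqrt α * enormR v))

/-- Logarithmic map at the origin of the Poincaré ball. -/
def logD {n : ℕ} (α : ℝ) (y : Fin n → ℝ) : Fin n → ℝ :=
  fun i => artanh (Real.sqrt α * enormR y) * (y i / (Real.sqrt α * enormR y))


lemma enormR_pos' {n : ℕ} {v : Fin n → ℝ} (hv : v ≠ 0) : 0 < enormR v := by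
  apply Real.sqrt_pos.2
  obtain ⟨i, hi⟩ := Function.ne_iff.1 hv
  exact Finset.sum_pos' (fun j _ => sq_nonneg _) ⟨i, Finset.mem_univ i, by
    have : v i ≠ 0 := hi
    positivity⟩

lemma enorm_smul' {n : ℕ} {c : ℝ} (hc : 0 ≤ c) (v : Fin n → ℝ) :
    enormR (c • v) = c * enormR v := by
  unfold enormR
  have h : ∑ i : Fin n, ((c • v) i) ^ 2 = c ^ 2 * ∑ i : Fin n, (v i) ^ 2 := by
    rw [Finset.mul_sum]
    exact Finset.sum_congr rfl fun i _ => by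
      simp only [Pi.smul_apply, smul_eq_mul]; ring
  rw [h, Real.sqrt_mul (sq_nonneg c), Real.sqrt_sq hc]

lemma artanh_pos' {x : ℝ} (h0 : 0 < x) (h1 : x < 1) : 0 < artanh x := by
  unfold artanh
  have h : 1 < (1 + x) / (1 - x) := by
    rw [lt_div_iff₀ (by linarith)]; linarith
  have := Real.log_pos h
  linarith

theorem mobius_homogeneous_simplification {n : ℕ} {α : ℝ} (hα : 0 < α)
    (σ : (Fin n → ℝ) → (Fin n → ℝ))
    (hσ : ∀ (c : ℝ) (v : Fin n → ℝ), 0 < c → σ (c • v) = c • σ v)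
    {y : Fin n → ℝ} (hy : α * ∑ i : Fin n, (y i) ^ 2 < 1)
    (hy0 : y ≠ 0) (hσy : σ y ≠ 0) :
    expD α (σ (logD α y)) = fun i => (1 / Real.sqrt α) *
      Real.tanh ((enormR (σ y) / enormR y) * artanh (Real.sqrt α * enormR y)) *
      (σ y i / enormR (σ y)) := by
  
  have hs0 : 0 < Real.sqrt α := Real.sqrt_pos.2 hα
  set s := Real.sqrt α with hs
  have he : 0 < enormR y := enormR_pos' hy0
  have hE : 0 < enormR (σ y) := enormR_pos' hσy
  have hsum : (0:ℝ) ≤ ∑ i : Fin n, (y i) ^ 2 :=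
    Finset.sum_nonneg fun i _ => sq_nonneg _
  have hse1 : s * enormR y < 1 := by
    have h1 : s ^ 2 = α := Real.sq_sqrt hα.le
    have h2 : enormR y ^ 2 = ∑ i : Fin n, (y i) ^ 2 := Real.sq_sqrt hsum
    nlinarith [mul_pos hs0 he]
  have hA : 0 < artanh (s * enormR y) := artanh_pos' (mul_pos hs0 he) hse1
  set A := artanh (s * enormR y) with hAdef
  have hc : 0 < A / (s * enormR y) := div_pos hA (mul_pos hs0 he)
  have hlog : logD α y = (A / (s * enormR y)) • y := by
    funext i
    simp only [logD, Pi.smul_apply, smul_eq_mul, ← hs, ← hAdef]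
    ring
  have hσlog : σ (logD α y) = (A / (s * enormR y)) • σ y := by
    rw [hlog, hσ _ _ hc]
  have hEn : enormR (σ (logD α y)) = (A / (s * enormR y)) * enormR (σ y) := by
    rw [hσlog, enorm_smul' hc.le]
  funext i
  simp only [expD, hσlog, enorm_smul' hc.le, Pi.smul_apply, smul_eq_mul, ← hs]
  have harg : s * (A / (s * enormR y) * enormR (σ y))
      = enormR (σ y) / enormR y * A := by
    field_simp
  rw [harg]
  field_simp
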